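/- If H is a planar graph and F is a non-planar graph, then no region intersection graph over H contains the 1-subdivision F^(1) of F as an induced minor. -/

import Mathlib

/-- A set of vertices is connected in `G` if the induced subgraph is connected
(in particular, it is nonempty). -/
def ConnectedIn {V : Type*} (G : SimpleGraph V) (S : Set V) : Prop :=
  (G.induce S).Connected

/-- `H` is a minor of `G`: there is a minor model of `H` in `G`, i.e. a family of
nonempty, connected, pairwise disjoint branch sets, with an edge of `G` between the
branch sets of any two vertices adjacent in `H`. -/
def IsMinor {α β : Type*} (H : SimpleGraph α) (G : SimpleGraph β) : Prop :=
  ∃ φ : α → Set β,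
    (∀ a, ConnectedIn G (φ a)) ∧
    (Pairwise fun a b => Disjoint (φ a) (φ b)) ∧
    (∀ a b : α, H.Adj a b → ∃ u ∈ φ a, ∃ v ∈ φ b, G.Adj u v)

/-- `H` is an induced minor of `G`: as for a minor model, but two distinct branch sets
are joined by an edge of `G` *iff* the corresponding vertices are adjacent in `H`. -/
def IsInducedMinor {α β : Type*} (H : SimpleGraph α) (G : SimpleGraph β) : Prop :=
  ∃ φ : α → Set β,
    (∀ a, ConnectedIn G (φ a)) ∧
    (Pairwise fun a b => Disjoint (φ a) (φ b)) ∧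
    (∀ a b : α, a ≠ b → (H.Adj a b ↔ ∃ u ∈ φ a, ∃ v ∈ φ b, G.Adj u v))

/-- `G` is a region intersection graph over `H`: every vertex `v` of `G` is assigned a
connected subgraph (region) `R v` of `H` such that two distinct vertices of `G` are
adjacent iff their regions intersect. -/
def IsRIG {α β : Type*} (G : SimpleGraph α) (H : SimpleGraph β) : Prop :=
  ∃ R : α → Set β,
    (∀ v, ConnectedIn H (R v)) ∧
    (∀ u v : α, u ≠ v → (G.Adj u v ↔ (R u ∩ R v).Nonempty))

/-- Identification relation used to build the internal vertices of the `ℓ`-subdivision: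
the `i`-th internal vertex of the edge directed as `(u, v)` equals the `(ℓ-1-i)`-th
internal vertex of the edge directed as `(v, u)`. -/
def SubdivRel {V : Type*} (G : SimpleGraph V) (ℓ : ℕ) :
    ({d : V × V // G.Adj d.1 d.2} × Fin ℓ) → ({d : V × V // G.Adj d.1 d.2} × Fin ℓ) → Prop :=
  fun a b => a.1.1.1 = b.1.1.2 ∧ a.1.1.2 = b.1.1.1 ∧ (a.2 : ℕ) + (b.2 : ℕ) + 1 = ℓ

/-- Vertices of the `ℓ`-subdivision of `G`: the branching (original) vertices together
with `ℓ` internal (subdivision) vertices on each edge. -/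
def SubdivVert {V : Type*} (G : SimpleGraph V) (ℓ : ℕ) : Type _ :=
  V ⊕ Quot (SubdivRel G ℓ)

/-- The `ℓ`-subdivision `G^(ℓ)` of `G`: every edge of `G` is replaced by a path with
`ℓ + 1` edges (so with `ℓ` new internal vertices). -/
def subdiv {V : Type*} (G : SimpleGraph V) (ℓ : ℕ) : SimpleGraph (SubdivVert G ℓ) :=
  SimpleGraph.fromRel (fun x y =>
    (ℓ = 0 ∧ ∃ u v : V, G.Adj u v ∧ x = Sum.inl u ∧ y = Sum.inl v) ∨
    (∃ (d : {d : V × V // G.Adj d.1 d.2}) (i : Fin ℓ),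
      (i : ℕ) = 0 ∧ x = Sum.inl d.1.1 ∧ y = Sum.inr (Quot.mk _ (d, i))) ∨
    (∃ (d : {d : V × V // G.Adj d.1 d.2}) (i j : Fin ℓ),
      (i : ℕ) + 1 = (j : ℕ) ∧ x = Sum.inr (Quot.mk _ (d, i)) ∧ y = Sum.inr (Quot.mk _ (d, j))))

/-- A graph is planar iff it has no `K_5` minor and no `K_{3,3}` minor
(Wagner's characterization of planarity). -/
def IsPlanar {V : Type*} (G : SimpleGraph V) : Prop :=
  ¬ IsMinor (SimpleGraph.completeGraph (Fin 5)) G ∧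
  ¬ IsMinor (completeBipartiteGraph (Fin 3) (Fin 3)) G

open SimpleGraph

section Aux
variable {V : Type*} {G : SimpleGraph V}

lemma ConnectedIn.nonempty {S : Set V} (h : ConnectedIn G S) : S.Nonempty := by
  have h' : Nonempty S := SimpleGraph.Connected.nonempty h
  exact Set.Nonempty.of_subtype

lemma reachable_induce_mono {S T : Set V} (hST : S ⊆ T) {u v : V} (hu : u ∈ S) (hv : v ∈ S)
    (h : (G.induce S).Reachable ⟨u, hu⟩ ⟨v, hv⟩) :
    (G.induce T).Reachable ⟨u, hST hu⟩ ⟨v, hST hv⟩ := by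
  exact h.map (induceHomOfLE G hST).toHom

lemma connectedIn_iUnion {ι : Type*} (K : SimpleGraph ι) (hK : K.Connected)
    (S : ι → Set V) (hS : ∀ i, ConnectedIn G (S i))
    (hlink : ∀ i j, K.Adj i j → ∃ u ∈ S i, ∃ v ∈ S j, u = v ∨ G.Adj u v) :
    ConnectedIn G (⋃ i, S i) := by
  rw [ConnectedIn, connected_iff]
  have hne : ∀ i (u : V) (hu : u ∈ S i), u ∈ ⋃ k, S k := fun i u hu => Set.mem_iUnion.2 ⟨i, hu⟩
  have key : ∀ {i j : ι} (w : K.Walk i j) (u : V) (hu : u ∈ S i) (v : V) (hv : v ∈ S j),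
      (G.induce (⋃ k, S k)).Reachable ⟨u, hne i u hu⟩ ⟨v, hne j v hv⟩ := by
    intro i j w
    induction w with
    | nil =>
      intro u hu v hv
      exact reachable_induce_mono (Set.subset_iUnion S _) hu hv ((hS _).preconnected _ _)
    | @cons i k j hadj p ih =>
      intro u hu v hv
      obtain ⟨a, ha, b, hb, hab⟩ := hlink _ _ hadj
      have r1 : (G.induce (⋃ k, S k)).Reachable ⟨u, hne i u hu⟩ ⟨a, hne i a ha⟩ :=
        reachable_induce_mono (Set.subset_iUnion S _) hu ha ((hS _).preconnected _ _)
      have r2 : (G.induce (⋃ k, S k)).Reachable ⟨a, hne i a ha⟩ ⟨b, hne k b hb⟩ := by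
        rcases hab with rfl | hab
        · rfl
        · exact SimpleGraph.Adj.reachable hab
      exact r1.trans (r2.trans (ih b hb v hv))
  constructor
  · rintro ⟨x, hx⟩ ⟨y, hy⟩
    obtain ⟨i, hi⟩ := Set.mem_iUnion.1 hx
    obtain ⟨j, hj⟩ := Set.mem_iUnion.1 hy
    obtain ⟨w⟩ := hK.preconnected i j
    exact key w x hi y hj
  · obtain ⟨i⟩ := hK.nonempty
    obtain ⟨u, hu⟩ := (hS i).nonempty
    exact ⟨⟨u, hne i u hu⟩⟩

lemma connectedIn_union_center {ι : Type*} (C : Set V) (hC : ConnectedIn G C)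
    (S : ι → Set V) (hS : ∀ i, ConnectedIn G (S i)) (hmeet : ∀ i, (S i ∩ C).Nonempty) :
    ConnectedIn G (C ∪ ⋃ i, S i) := by
  have heq : C ∪ ⋃ i, S i = ⋃ o : Option ι, (Option.elim o C S) := by
    ext x
    simp [Set.mem_iUnion, Option.exists]
  rw [heq]
  refine connectedIn_iUnion (SimpleGraph.fromRel (fun x y => x = none)) ?_
    (fun o => Option.elim o C S) (fun o => by cases o with | none => exact hC | some i => exact hS i) ?_
  · rw [connected_iff]
    refine ⟨fun x y => ?_, ⟨none⟩⟩
    have hx : ∀ z : Option ι, (SimpleGraph.fromRel (fun x y : Option ι => x = none)).Reachable z none := by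
      intro z
      rcases eq_or_ne z none with rfl | hz
      · rfl
      · exact SimpleGraph.Adj.reachable (by rw [SimpleGraph.fromRel_adj]; exact ⟨hz, Or.inr rfl⟩)
    exact (hx x).trans (hx y).symm
  · intro o o' hadj
    rw [SimpleGraph.fromRel_adj] at hadj
    obtain ⟨hne', h | h⟩ := hadj
    · subst h
      cases o' with
      | none => exact absurd rfl hne'
      | some i =>
        obtain ⟨u, hu, hu'⟩ := hmeet i
        exact ⟨u, hu', u, hu, Or.inl rfl⟩
    · subst h
      cases o with
      | none => exact absurd rfl hne'
      | some i =>
        obtain ⟨u, hu, hu'⟩ := hmeet i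
        exact ⟨u, hu, u, hu', Or.inl rfl⟩

lemma connectedIn_walkSupport {u v : V} (w : G.Walk u v) :
    ConnectedIn G {x | x ∈ w.support} := by
  have h := w.toSubgraph_connected
  rw [SimpleGraph.Subgraph.connected_iff'] at h
  rw [ConnectedIn]
  have hv : ∀ x : w.toSubgraph.verts, (x : V) ∈ {x | x ∈ w.support} :=
    fun x => (w.mem_verts_toSubgraph).1 x.2
  let f : w.toSubgraph.coe →g G.induce {x | x ∈ w.support} :=
    ⟨fun x => ⟨x.1, hv x⟩, fun {a b} hab => hab.adj_sub⟩
  refine h.map f ?_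
  rintro ⟨y, hy⟩
  exact ⟨⟨y, (w.mem_verts_toSubgraph).2 hy⟩, rfl⟩

lemma exists_walk_avoid {S : Set V} : ∀ {x y : V} (w : G.Walk x y), x ∉ S → y ∈ S →
    ∃ (z : V) (w' : G.Walk x z) (t : V), t ∈ S ∧ G.Adj z t ∧
      (∀ v ∈ w'.support, v ∉ S) ∧ (∀ v ∈ w'.support, v ∈ w.support) := by
  intro x y w
  induction w with
  | nil => intro hx hy; exact absurd hy hx
  | @cons x b y hadj p ih =>
    intro hx hy
    by_cases hb : b ∈ S
    · exact ⟨x, SimpleGraph.Walk.nil, b, hb, hadj, by simpa using hx,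
        by intro v hv; simp at hv; subst hv; exact SimpleGraph.Walk.start_mem_support _⟩
    · obtain ⟨z, w', t, ht, hzt, hav, hsub⟩ := ih hb hy
      refine ⟨z, SimpleGraph.Walk.cons hadj w', t, ht, hzt, ?_, ?_⟩
      · intro v hv
        rw [SimpleGraph.Walk.support_cons] at hv
        rcases List.mem_cons.1 hv with hv2 | hv2
        · exact hv2 ▸ hx
        · exact hav v hv2
      · intro v hv
        rw [SimpleGraph.Walk.support_cons] at hv
        rw [SimpleGraph.Walk.support_cons]
        rcases List.mem_cons.1 hv with hv2 | hv2
        · exact hv2 ▸ List.mem_cons_self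
        · exact List.mem_cons_of_mem _ (hsub v hv2)

end Aux

lemma IsMinor.trans'' {α β γ : Type*} {K : SimpleGraph α} {F : SimpleGraph β} {H : SimpleGraph γ}
    (h1 : IsMinor K F) (h2 : IsMinor F H) : IsMinor K H := by
  obtain ⟨φ, hφc, hφd, hφa⟩ := h1
  obtain ⟨ψ, hψc, hψd, hψa⟩ := h2
  refine ⟨fun k => ⋃ a : φ k, ψ a.1, ?_, ?_, ?_⟩
  · intro k
    refine connectedIn_iUnion (F.induce (φ k)) (hφc k) _ (fun a => hψc a.1) ?_
    intro a b hab
    have hadj : F.Adj a.1 b.1 := hab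
    obtain ⟨u, hu, v, hv, huv⟩ := hψa _ _ hadj
    exact ⟨u, hu, v, hv, Or.inr huv⟩
  · intro k k' hkk'
    rw [Set.disjoint_left]
    rintro x hx hx'
    obtain ⟨a, ha⟩ := Set.mem_iUnion.1 hx
    obtain ⟨b, hb⟩ := Set.mem_iUnion.1 hx'
    have hab : a.1 ≠ b.1 := by
      intro h
      exact Set.disjoint_left.1 (hφd hkk') a.2 (h ▸ b.2)
    exact Set.disjoint_left.1 (hψd hab) ha hb
  · intro k k' hkk'
    obtain ⟨a, ha, b, hb, hab⟩ := hφa _ _ hkk'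
    obtain ⟨u, hu, v, hv, huv⟩ := hψa _ _ hab
    exact ⟨u, Set.mem_iUnion.2 ⟨⟨a, ha⟩, hu⟩, v, Set.mem_iUnion.2 ⟨⟨b, hb⟩, hv⟩, huv⟩

section Subdiv
variable {β : Type*} {F : SimpleGraph β}

/-- The internal vertex of the edge `ab` in the 1-subdivision. -/
def W {a b : β} (h : F.Adj a b) : Quot (SubdivRel F 1) :=
  Quot.mk _ (⟨(a, b), h⟩, 0)

lemma W_symm {a b : β} (h : F.Adj a b) : W h.symm = W h :=
  Quot.sound ⟨rfl, rfl, rfl⟩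

lemma quot_mk_eq_iff {d d' : {d : β × β // F.Adj d.1 d.2}} {i j : Fin 1} :
    Quot.mk (SubdivRel F 1) (d, i) = Quot.mk (SubdivRel F 1) (d', j) ↔
      (d.1 = d'.1 ∨ (d.1.1 = d'.1.2 ∧ d.1.2 = d'.1.1)) := by
  constructor
  · intro h
    have h' := Quot.eq.1 h
    have key : ∀ x y : ({d : β × β // F.Adj d.1 d.2} × Fin 1),
        Relation.EqvGen (SubdivRel F 1) x y →
        (x.1.1 = y.1.1 ∨ (x.1.1.1 = y.1.1.2 ∧ x.1.1.2 = y.1.1.1)) := by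
      intro x y hxy
      induction hxy with
      | rel a b hab => exact Or.inr ⟨hab.1, hab.2.1⟩
      | refl a => exact Or.inl rfl
      | symm a b _ ih =>
        rcases ih with h | ⟨h1, h2⟩
        · exact Or.inl h.symm
        · exact Or.inr ⟨h2.symm, h1.symm⟩
      | trans a b c _ _ ih1 ih2 =>
        rcases ih1 with h | ⟨h1, h2⟩ <;> rcases ih2 with g | ⟨g1, g2⟩
        · exact Or.inl (h.trans g)
        · exact Or.inr ⟨(congrArg Prod.fst h).trans g1, (congrArg Prod.snd h).trans g2⟩
        · exact Or.inr ⟨h1.trans (congrArg Prod.snd g.symm).symm, h2.trans (congrArg Prod.fst g)⟩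
        · exact Or.inl (Prod.ext (h1.trans g2) (h2.trans g1))
    exact key _ _ h'
  · rintro (h | ⟨h1, h2⟩)
    · have hd : d = d' := Subtype.ext h
      subst hd
      have : i = j := Subsingleton.elim i j
      subst this
      rfl
    · exact Quot.sound ⟨h1, h2, by omega⟩

lemma subdiv_not_adj_inl_inl (a b : β) : ¬ (subdiv F 1).Adj (Sum.inl a) (Sum.inl b) := by
  intro h
  unfold subdiv at h; have h := (SimpleGraph.fromRel_adj _ _ _).1 h
  rcases h.2 with h' | h'
  all_goals rcases h' with ⟨h0, _⟩ | ⟨d, i, hi, hx, hy⟩ | ⟨d, i, j, hij, hx, hy⟩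
  any_goals exact absurd h0 one_ne_zero
  all_goals simp at hx hy

lemma subdiv_not_adj_inr_inr (q q' : Quot (SubdivRel F 1)) :
    ¬ (subdiv F 1).Adj (Sum.inr q) (Sum.inr q') := by
  intro h
  unfold subdiv at h; have h := (SimpleGraph.fromRel_adj _ _ _).1 h
  rcases h.2 with h' | h'
  all_goals rcases h' with ⟨h0, _⟩ | ⟨d, i, hi, hx, hy⟩ | ⟨d, i, j, hij, hx, hy⟩
  any_goals exact absurd h0 one_ne_zero
  any_goals simp at hx hy
  all_goals omega

lemma subdiv_adj_inl_W {a b : β} (h : F.Adj a b) :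
    (subdiv F 1).Adj (Sum.inl a) (Sum.inr (W h)) := by
  unfold subdiv; refine (SimpleGraph.fromRel_adj _ _ _).2 ?_
  exact ⟨by exact Sum.inl_ne_inr, Or.inl (Or.inr (Or.inl ⟨⟨(a, b), h⟩, 0, rfl, rfl, rfl⟩))⟩

lemma subdiv_adj_inl_W' {a b : β} (h : F.Adj a b) :
    (subdiv F 1).Adj (Sum.inl b) (Sum.inr (W h)) := by
  rw [← W_symm h]
  exact subdiv_adj_inl_W h.symm

lemma subdiv_adj_inl_W_iff {a b c : β} (h : F.Adj a b) :
    (subdiv F 1).Adj (Sum.inl c) (Sum.inr (W h)) → c = a ∨ c = b := by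
  intro hadj
  unfold subdiv at hadj; have hadj := (SimpleGraph.fromRel_adj _ _ _).1 hadj
  rcases hadj.2 with h' | h'
  all_goals rcases h' with ⟨h0, _⟩ | ⟨d, i, hi, hx, hy⟩ | ⟨d, i, j, hij, hx, hy⟩
  any_goals exact absurd h0 one_ne_zero
  · have hc : c = d.1.1 := Sum.inl.inj hx
    have hq : Quot.mk (SubdivRel F 1) (⟨(a, b), h⟩, 0) = Quot.mk (SubdivRel F 1) (d, i) :=
      Sum.inr.inj hy
    rcases (quot_mk_eq_iff (F := F)).1 hq with heq | ⟨h1, h2⟩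
    · exact Or.inl (hc.trans (congrArg Prod.fst heq).symm)
    · exact Or.inr (hc.trans h2.symm)
  · exact absurd hx (by simp)
  · exact absurd hx (by simp)
  · exact absurd hy (by simp)

end Subdiv

/-- If `H` is planar and `F` is non-planar, then no region intersection graph over `H`
contains the 1-subdivision `F^(1)` of `F` as an induced minor. -/
theorem statement4 {α β : Type*} (H : SimpleGraph α) (F : SimpleGraph β)
    (hH : IsPlanar H) (hF : ¬ IsPlanar F) :
    ∀ {γ : Type*} (G : SimpleGraph γ),
      IsRIG G H → ¬ IsInducedMinor (subdiv F 1) G := by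
  intro γ G hRIG hIM
  obtain ⟨R, hRconn, hRadj⟩ := hRIG
  obtain ⟨φ, hφconn, hφdisj, hφadj⟩ := hIM
  set T : SubdivVert F 1 → Set α := fun x => ⋃ v : φ x, R v.1 with hT
  have hTconn : ∀ x, ConnectedIn H (T x) := by
    intro x
    refine connectedIn_iUnion (G.induce (φ x)) (hφconn x) _ (fun v => hRconn v.1) ?_
    intro u v huv
    have hGadj : G.Adj u.1 v.1 := huv
    obtain ⟨p, hp⟩ := (hRadj u.1 v.1 hGadj.ne).1 hGadj
    exact ⟨p, hp.1, p, hp.2, Or.inl rfl⟩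
  have hTdisj : ∀ x y, x ≠ y → ¬ (subdiv F 1).Adj x y → Disjoint (T x) (T y) := by
    intro x y hxy hnadj
    rw [Set.disjoint_left]
    rintro p hp hp'
    obtain ⟨u, hu⟩ := Set.mem_iUnion.1 hp
    obtain ⟨v, hv⟩ := Set.mem_iUnion.1 hp'
    have hne : u.1 ≠ v.1 := fun h => Set.disjoint_left.1 (hφdisj hxy) u.2 (h ▸ v.2)
    have hGadj : G.Adj u.1 v.1 := (hRadj u.1 v.1 hne).2 ⟨p, hu, hv⟩
    exact hnadj ((hφadj x y hxy).2 ⟨u.1, u.2, v.1, v.2, hGadj⟩)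
  have hTmeet : ∀ x y, (subdiv F 1).Adj x y → (T x ∩ T y).Nonempty := by
    intro x y hadj
    obtain ⟨u, hu, v, hv, huv⟩ := (hφadj x y hadj.ne).1 hadj
    obtain ⟨p, hp⟩ := (hRadj u v huv.ne).1 huv
    exact ⟨p, Set.mem_iUnion.2 ⟨⟨u, hu⟩, hp.1⟩, Set.mem_iUnion.2 ⟨⟨v, hv⟩, hp.2⟩⟩
  -- the connector sets
  have main : ∀ (a b : β) (hab : F.Adj a b), ∃ P : Set α,
      ConnectedIn H P ∧ P ⊆ T (Sum.inr (W hab)) ∧ (P ∩ T (Sum.inl a)).Nonempty ∧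
      (∀ v ∈ P, v ∉ T (Sum.inl b)) ∧ ∃ z ∈ P, ∃ t ∈ T (Sum.inl b), H.Adj z t := by
    intro a b hab
    have hne_ab : (Sum.inl a : SubdivVert F 1) ≠ Sum.inl b := by
      simp [hab.ne]
    have hBdisj : Disjoint (T (Sum.inl a)) (T (Sum.inl b)) :=
      hTdisj _ _ hne_ab (subdiv_not_adj_inl_inl a b)
    obtain ⟨x, hxa, hxC⟩ := hTmeet (Sum.inl a) (Sum.inr (W hab)) (subdiv_adj_inl_W hab)
    obtain ⟨y, hyb, hyC⟩ := hTmeet (Sum.inl b) (Sum.inr (W hab)) (subdiv_adj_inl_W' hab)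
    have hxnb : x ∉ T (Sum.inl b) := fun h => Set.disjoint_left.1 hBdisj hxa h
    obtain ⟨w0⟩ := (hTconn (Sum.inr (W hab))).preconnected ⟨x, hxC⟩ ⟨y, hyC⟩
    let w1 : H.Walk x y := w0.map (SimpleGraph.Embedding.induce (T (Sum.inr (W hab)))).toHom
    have hw1sub : ∀ v ∈ w1.support, v ∈ T (Sum.inr (W hab)) := by
      intro v hv
      change v ∈ (w0.map _).support at hv; rw [SimpleGraph.Walk.support_map, List.mem_map] at hv
      obtain ⟨s, _, rfl⟩ := hv
      exact s.2
    obtain ⟨z, w', t, ht, hzt, hav, hsub⟩ := exists_walk_avoid w1 hxnb hyb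
    refine ⟨{v | v ∈ w'.support}, connectedIn_walkSupport w', ?_, ?_, hav, z,
      SimpleGraph.Walk.end_mem_support w', t, ht, hzt⟩
    · intro v hv
      exact hw1sub v (hsub v hv)
    · exact ⟨x, SimpleGraph.Walk.start_mem_support w', hxa⟩
  choose P hPconn hPsub hPmeet hPavoid hPedge using main
  -- orientation
  have tri : ∀ a b : β, a ≠ b → WellOrderingRel a b ∨ WellOrderingRel b a := by
    intro a b hne
    rcases trichotomous_of WellOrderingRel a b with h | h | h
    · exact Or.inl h
    · exact absurd h hne
    · exact Or.inr h
  have hasymm : ∀ a b : β, WellOrderingRel a b → WellOrderingRel b a → False := by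
    intro a b h1 h2
    exact (irrefl_of WellOrderingRel a) (trans_of WellOrderingRel h1 h2)
  set Φ : β → Set α := fun a =>
    T (Sum.inl a) ∪ ⋃ p : {b : β // F.Adj a b ∧ WellOrderingRel a b}, P a p.1 p.2.1 with hΦ
  have hFminor : IsMinor F H := by
    refine ⟨Φ, ?_, ?_, ?_⟩
    · intro a
      exact connectedIn_union_center _ (hTconn _) _ (fun p => hPconn a p.1 p.2.1)
        (fun p => hPmeet a p.1 p.2.1)
    · intro a c hac
      rw [Set.disjoint_left]
      rintro v (hv | hv) hv'
      · rcases hv' with hv' | hv'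
        · exact Set.disjoint_left.1
            (hTdisj (Sum.inl a) (Sum.inl c) (fun h => hac (Sum.inl.inj h)) (subdiv_not_adj_inl_inl a c)) hv hv'
        · obtain ⟨⟨d, hcd, hrcd⟩, hvP⟩ := Set.mem_iUnion.1 hv'
          rcases eq_or_ne a d with rfl | had
          · exact hPavoid c a hcd v hvP hv
          · have hnadj : ¬ (subdiv F 1).Adj (Sum.inl a) (Sum.inr (W hcd)) := by
              intro hadj
              rcases subdiv_adj_inl_W_iff hcd hadj with h | h
              · exact hac h
              · exact had h
            exact Set.disjoint_left.1 (hTdisj _ _ (by exact Sum.inl_ne_inr) hnadj) hv (hPsub c d hcd hvP)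
      · obtain ⟨⟨b, hab, hrab⟩, hvP⟩ := Set.mem_iUnion.1 hv
        rcases hv' with hv' | hv'
        · rcases eq_or_ne c b with rfl | hcb
          · exact hPavoid a c hab v hvP hv'
          · have hnadj : ¬ (subdiv F 1).Adj (Sum.inl c) (Sum.inr (W hab)) := by
              intro hadj
              rcases subdiv_adj_inl_W_iff hab hadj with h | h
              · exact hac h.symm
              · exact hcb h
            exact Set.disjoint_left.1 (hTdisj _ _ (by exact Sum.inl_ne_inr) hnadj) hv' (hPsub a b hab hvP)
        · obtain ⟨⟨d, hcd, hrcd⟩, hvP'⟩ := Set.mem_iUnion.1 hv'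
          have hWne : (Sum.inr (W hab) : SubdivVert F 1) ≠ Sum.inr (W hcd) := by
            intro heq
            have hq := Sum.inr.inj heq
            rcases (quot_mk_eq_iff (F := F)).1 hq with heq' | ⟨h1, h2⟩
            · exact hac (congrArg Prod.fst heq')
            · have h1' : a = d := h1
              have h2' : b = c := h2
              refine hasymm a b hrab ?_
              rw [h2', h1']
              exact hrcd
          exact Set.disjoint_left.1
            (hTdisj _ _ hWne (subdiv_not_adj_inr_inr _ _))
            (hPsub a b hab hvP) (hPsub c d hcd hvP')
    · intro a b hab
      rcases tri a b hab.ne with hr | hr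
      · obtain ⟨z, hz, t, ht, hzt⟩ := hPedge a b hab
        exact ⟨z, Or.inr (Set.mem_iUnion.2 ⟨⟨b, hab, hr⟩, hz⟩), t, Or.inl ht, hzt⟩
      · obtain ⟨z, hz, t, ht, hzt⟩ := hPedge b a hab.symm
        exact ⟨t, Or.inl ht, z, Or.inr (Set.mem_iUnion.2 ⟨⟨a, hab.symm, hr⟩, hz⟩), hzt.symm⟩
  rw [IsPlanar, not_and_or, not_not, not_not] at hF
  rcases hF with h5 | h33
  · exact hH.1 (h5.trans'' hFminor)
  · exact hH.2 (h33.trans'' hFminor)
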